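/- Let V be a finite nonempty set and let S be a nonempty finite set of functions V → V that is closed under composition. Let K ⊆ S be a nonempty subset that is a two-sided ideal of S (for all k ∈ K and W ∈ S, both composites 'first W then k' and 'first k then W' lie in K) and that is contained in every nonempty two-sided ideal of S (so K is the kernel of S). Then for all x, y ∈ V: x ≡_S y under the stability relation (i.e. for every W₁ ∈ S there exists W₂ ∈ S with W₂(W₁(x)) = W₂(W₁(y))) if and only if k(x) = k(y) for every k ∈ K. -/
import Mathlib


/-- The stability relation of a finite transformation semigroup `S` coincides with
the relation "collapsed by every element of the kernel `K`".
Functions act on the right: a product `W₁W₂` means "first apply `W₁`, then `W₂`",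
so `k ∘ W` is "first `W` then `k`". -/
theorem stability_iff_kernel_collapse {V : Type} [Fintype V] [Nonempty V]
    (S : Set (V → V)) (hSne : S.Nonempty)
    (hSclosed : ∀ f ∈ S, ∀ g ∈ S, g ∘ f ∈ S)
    (K : Set (V → V)) (hKS : K ⊆ S) (hKne : K.Nonempty)
    (hKideal : ∀ k ∈ K, ∀ W ∈ S, k ∘ W ∈ K ∧ W ∘ k ∈ K)
    (hKmin : ∀ I : Set (V → V), I ⊆ S → I.Nonempty →
      (∀ k ∈ I, ∀ W ∈ S, k ∘ W ∈ I ∧ W ∘ k ∈ I) → K ⊆ I)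
    (x y : V) :
    (∀ W₁ ∈ S, ∃ W₂ ∈ S, W₂ (W₁ x) = W₂ (W₁ y)) ↔ (∀ k ∈ K, k x = k y) := by
  classical
  constructor
  · intro hstab
    -- Step 1: for any finset F of elements of S, there is s ∈ S collapsing (x,y)
    -- and (W x, W y) for all W ∈ F.
    have key : ∀ F : Finset (V → V), ↑F ⊆ S →
        ∃ s ∈ S, s x = s y ∧ ∀ W ∈ F, s (W x) = s (W y) := by
      intro F
      induction F using Finset.induction_on with
      | empty =>
        intro _
        obtain ⟨W₁, hW₁⟩ := hSne
        obtain ⟨W₂, hW₂, h⟩ := hstab W₁ hW₁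
        exact ⟨W₂ ∘ W₁, hSclosed W₁ hW₁ W₂ hW₂, h, fun W hW => absurd hW (by simp)⟩
      | @insert W F' hWF' ih =>
        intro hsub
        have hW : W ∈ S := hsub (by simp)
        have hF' : ↑F' ⊆ S := fun a ha => hsub (by simp [ha])
        obtain ⟨s, hs, hxy, hall⟩ := ih hF'
        have hsW : s ∘ W ∈ S := hSclosed W hW s hs
        obtain ⟨W₂, hW₂, h⟩ := hstab (s ∘ W) hsW
        refine ⟨W₂ ∘ s, hSclosed s hs W₂ hW₂, ?_, ?_⟩
        · simp [Function.comp, hxy]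
        · intro W' hW'
          rcases Finset.mem_insert.mp hW' with rfl | hW'
          · exact h
          · simp [Function.comp, hall W' hW']
    have hSfin : S.Finite := Set.toFinite S
    obtain ⟨s, hs, hxy, hall⟩ := key hSfin.toFinset (fun a ha => hSfin.mem_toFinset.mp ha)
    have hall' : ∀ W ∈ S, s (W x) = s (W y) := by
      intro W hW
      exact hall W (hSfin.mem_toFinset.mpr hW)
    -- Step 2: the set of such elements is a two-sided ideal of S.
    set I : Set (V → V) :=
      {t | t ∈ S ∧ t x = t y ∧ ∀ W ∈ S, t (W x) = t (W y)} with hI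
    have hIS : I ⊆ S := fun t ht => ht.1
    have hIne : I.Nonempty := ⟨s, hs, hxy, hall'⟩
    have hIideal : ∀ k ∈ I, ∀ W ∈ S, k ∘ W ∈ I ∧ W ∘ k ∈ I := by
      rintro k ⟨hkS, hkxy, hkall⟩ W hWS
      constructor
      · refine ⟨hSclosed W hWS k hkS, hkall W hWS, ?_⟩
        intro W' hW'
        have := hkall (W ∘ W') (hSclosed W' hW' W hWS)
        simpa [Function.comp] using this
      · refine ⟨hSclosed k hkS W hWS, by simp [Function.comp, hkxy], ?_⟩
        intro W' hW'
        simp [Function.comp, hkall W' hW']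
    intro k hk
    exact (hKmin I hIS hIne hIideal hk).2.1
  · intro hcol W₁ hW₁
    obtain ⟨k, hk⟩ := hKne
    have hkW : k ∘ W₁ ∈ K := (hKideal k hk W₁ hW₁).1
    exact ⟨k, hKS hk, hcol (k ∘ W₁) hkW⟩
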